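/- Let E be a graded division algebra over a graded field with torsion-free grade group, Q = q(E) its quotient division ring obtained by central localization, and λ : Q* → E* the extension of the leading-term map (λ(ac⁻¹) = λ(a)λ(c)⁻¹ for a ∈ E\{0}, c ∈ Z(E)\{0}). If τ is a graded involution on E, extended to Q, then τ(λ(q)) = λ(τ(q)) for all q ∈ Q*; consequently λ(Σ_τ(Q)) ⊆ Σ_τ(E) and Σ_τ(Q) ∩ E* ⊆ Σ_τ(E). -/

import Mathlib

section Aux
variable {Γ E : Type*} [DecidableEq Γ] [Ring E]
variable (𝒜 : Γ → AddSubgroup E)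

/-- projection onto the `γ` component of the internal grading. -/
noncomputable def gproj (h : DirectSum.IsInternal 𝒜) (γ : Γ) : E →+ E :=
  ((𝒜 γ).subtype.comp (DFinsupp.evalAddMonoidHom γ)).comp
    (AddEquiv.ofBijective (DirectSum.coeAddMonoidHom 𝒜) h).symm.toAddMonoidHom

theorem gproj_mem (h : DirectSum.IsInternal 𝒜) (γ : Γ) (x : E) :
    gproj 𝒜 h γ x ∈ 𝒜 γ := by
  simp only [gproj, AddMonoidHom.comp_apply]
  exact SetLike.coe_mem _

theorem gproj_eq (h : DirectSum.IsInternal 𝒜) {γ δ : Γ} {x : E} (hx : x ∈ 𝒜 δ) :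
    gproj 𝒜 h γ x = if δ = γ then x else 0 := by
  have he : (AddEquiv.ofBijective (DirectSum.coeAddMonoidHom 𝒜) h).symm x
      = DirectSum.of (fun γ => 𝒜 γ) δ ⟨x, hx⟩ := by
    rw [AddEquiv.symm_apply_eq]
    exact (DirectSum.coeAddMonoidHom_of 𝒜 δ ⟨x, hx⟩).symm
  simp only [gproj, AddMonoidHom.comp_apply, AddEquiv.coe_toAddMonoidHom, he]
  have h2 := DirectSum.coe_of_apply (A := 𝒜) δ γ ⟨x, hx⟩
  refine h2.trans ?_
  split <;> rfl

theorem gproj_eq_self (h : DirectSum.IsInternal 𝒜) {γ : Γ} {x : E} (hx : x ∈ 𝒜 γ) :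
    gproj 𝒜 h γ x = x := by rw [gproj_eq 𝒜 h hx, if_pos rfl]

theorem gproj_eq_zero (h : DirectSum.IsInternal 𝒜) {γ δ : Γ} {x : E} (hx : x ∈ 𝒜 δ)
    (hne : δ ≠ γ) : gproj 𝒜 h γ x = 0 := by rw [gproj_eq 𝒜 h hx, if_neg hne]

theorem gproj_sup (h : DirectSum.IsInternal 𝒜) {S : Set Γ} {x : E}
    (hx : x ∈ ⨆ γ ∈ S, 𝒜 γ) {δ : Γ} (hδ : δ ∉ S) : gproj 𝒜 h δ x = 0 := by
  have hle : (⨆ γ ∈ S, 𝒜 γ) ≤ (gproj 𝒜 h δ).ker := by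
    refine iSup₂_le fun γ hγ y hy => ?_
    exact AddMonoidHom.mem_ker.2 (gproj_eq_zero 𝒜 h hy (fun hh => hδ (hh ▸ hγ)))
  exact AddMonoidHom.mem_ker.1 (hle hx)

theorem gproj_support (h : DirectSum.IsInternal 𝒜) (x : E) :
    ∃ s : Finset Γ, (∀ γ ∉ s, gproj 𝒜 h γ x = 0) ∧ (∀ γ ∈ s, gproj 𝒜 h γ x ≠ 0) ∧
      x = ∑ γ ∈ s, gproj 𝒜 h γ x := by
  classical
  set e := AddEquiv.ofBijective (DirectSum.coeAddMonoidHom 𝒜) h with he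
  have hπ : ∀ γ, gproj 𝒜 h γ x = ((e.symm x) γ : E) := fun γ => rfl
  refine ⟨(e.symm x).support, fun γ hγ => ?_, fun γ hγ => ?_, ?_⟩
  · rw [hπ, DFinsupp.notMem_support_iff.1 hγ]; rfl
  · rw [hπ]
    exact fun hz => DFinsupp.mem_support_iff.1 hγ (Subtype.ext hz)
  · conv_lhs => rw [← e.apply_symm_apply x]
    rw [show e (e.symm x) = DirectSum.coeAddMonoidHom 𝒜 (e.symm x) from rfl,
      DirectSum.coeAddMonoidHom_eq_dfinsuppSum]
    rfl

end Aux

section Aux2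
variable {Γ E : Type*} [AddCommGroup Γ] [LinearOrder Γ] [IsOrderedAddMonoid Γ] [DecidableEq Γ] [Ring E]
variable (𝒜 : Γ → AddSubgroup E)

theorem gproj_mul_top (h : DirectSum.IsInternal 𝒜)
    (hmul : ∀ {γ δ : Γ} {x y : E}, x ∈ 𝒜 γ → y ∈ 𝒜 δ → x * y ∈ 𝒜 (γ + δ))
    {x y : E} {γx γy : Γ}
    (hx1 : ∀ γ, γx < γ → gproj 𝒜 h γ x = 0)
    (hy1 : ∀ γ, γy < γ → gproj 𝒜 h γ y = 0) :
    gproj 𝒜 h (γx + γy) (x * y) = gproj 𝒜 h γx x * gproj 𝒜 h γy y ∧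
      ∀ γ, γx + γy < γ → gproj 𝒜 h γ (x * y) = 0 := by
  classical
  obtain ⟨sx, hsx0, hsx1, hsx2⟩ := gproj_support 𝒜 h x
  obtain ⟨sy, hsy0, hsy1, hsy2⟩ := gproj_support 𝒜 h y
  have hxle : ∀ γ ∈ sx, γ ≤ γx := fun γ hγ =>
    le_of_not_gt fun hlt => hsx1 γ hγ (hx1 γ hlt)
  have hyle : ∀ γ ∈ sy, γ ≤ γy := fun γ hγ =>
    le_of_not_gt fun hlt => hsy1 γ hγ (hy1 γ hlt)
  have hexp : ∀ t : Γ, gproj 𝒜 h t (x * y)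
      = ∑ γ ∈ sx, ∑ δ ∈ sy, gproj 𝒜 h t (gproj 𝒜 h γ x * gproj 𝒜 h δ y) := by
    intro t
    conv_lhs => rw [hsx2, hsy2, Finset.sum_mul_sum]
    rw [map_sum]
    exact Finset.sum_congr rfl fun γ _ => map_sum _ _ _
  constructor
  · rw [hexp]
    have hstep : ∀ γ ∈ sx, ∀ δ ∈ sy, (γ ≠ γx ∨ δ ≠ γy) →
        gproj 𝒜 h (γx + γy) (gproj 𝒜 h γ x * gproj 𝒜 h δ y) = 0 := by
      intro γ hγ δ hδ hne
      refine gproj_eq_zero 𝒜 h (hmul (gproj_mem 𝒜 h γ x) (gproj_mem 𝒜 h δ y)) (ne_of_lt ?_)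
      rcases hne with hne | hne
      · exact add_lt_add_of_lt_of_le (lt_of_le_of_ne (hxle γ hγ) hne) (hyle δ hδ)
      · exact add_lt_add_of_le_of_lt (hxle γ hγ) (lt_of_le_of_ne (hyle δ hδ) hne)
    have hinner : ∑ δ ∈ sy, gproj 𝒜 h (γx + γy) (gproj 𝒜 h γx x * gproj 𝒜 h δ y)
        = gproj 𝒜 h γx x * gproj 𝒜 h γy y := by
      have h0 : ∀ δ ∈ sy, δ ≠ γy →
          gproj 𝒜 h (γx + γy) (gproj 𝒜 h γx x * gproj 𝒜 h δ y) = 0 := by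
        intro δ hδ hne
        by_cases hγx : γx ∈ sx
        · exact hstep γx hγx δ hδ (Or.inr hne)
        · rw [hsx0 γx hγx, zero_mul, map_zero]
      have h1 : γy ∉ sy → gproj 𝒜 h (γx + γy) (gproj 𝒜 h γx x * gproj 𝒜 h γy y) = 0 := by
        intro hγy
        rw [hsy0 γy hγy, mul_zero, map_zero]
      rw [Finset.sum_eq_single γy h0 h1]
      exact gproj_eq_self 𝒜 h (hmul (gproj_mem 𝒜 h γx x) (gproj_mem 𝒜 h γy y))
    have houter : ∀ γ ∈ sx, γ ≠ γx → ∑ δ ∈ sy,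
        gproj 𝒜 h (γx + γy) (gproj 𝒜 h γ x * gproj 𝒜 h δ y) = 0 :=
      fun γ hγ hne => Finset.sum_eq_zero fun δ hδ => hstep γ hγ δ hδ (Or.inl hne)
    have houter0 : γx ∉ sx → ∑ δ ∈ sy,
        gproj 𝒜 h (γx + γy) (gproj 𝒜 h γx x * gproj 𝒜 h δ y) = 0 :=
      fun hγx => Finset.sum_eq_zero fun δ _ => by rw [hsx0 γx hγx, zero_mul, map_zero]
    rw [Finset.sum_eq_single γx houter houter0]
    exact hinner
  · intro t ht
    rw [hexp]
    refine Finset.sum_eq_zero fun γ hγ => Finset.sum_eq_zero fun δ hδ => ?_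
    refine gproj_eq_zero 𝒜 h (hmul (gproj_mem 𝒜 h γ x) (gproj_mem 𝒜 h δ y)) (ne_of_lt ?_)
    exact lt_of_le_of_lt (add_le_add (hxle γ hγ) (hyle δ hδ)) ht

theorem gproj_mul_bot (h : DirectSum.IsInternal 𝒜)
    (hmul : ∀ {γ δ : Γ} {x y : E}, x ∈ 𝒜 γ → y ∈ 𝒜 δ → x * y ∈ 𝒜 (γ + δ))
    {x y : E} {γx γy : Γ}
    (hx1 : ∀ γ, γ < γx → gproj 𝒜 h γ x = 0)
    (hy1 : ∀ γ, γ < γy → gproj 𝒜 h γ y = 0) :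
    gproj 𝒜 h (γx + γy) (x * y) = gproj 𝒜 h γx x * gproj 𝒜 h γy y := by
  classical
  obtain ⟨sx, hsx0, hsx1, hsx2⟩ := gproj_support 𝒜 h x
  obtain ⟨sy, hsy0, hsy1, hsy2⟩ := gproj_support 𝒜 h y
  have hxle : ∀ γ ∈ sx, γx ≤ γ := fun γ hγ =>
    le_of_not_gt fun hlt => hsx1 γ hγ (hx1 γ hlt)
  have hyle : ∀ γ ∈ sy, γy ≤ γ := fun γ hγ =>
    le_of_not_gt fun hlt => hsy1 γ hγ (hy1 γ hlt)
  have hexp : gproj 𝒜 h (γx + γy) (x * y)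
      = ∑ γ ∈ sx, ∑ δ ∈ sy, gproj 𝒜 h (γx + γy) (gproj 𝒜 h γ x * gproj 𝒜 h δ y) := by
    conv_lhs => rw [hsx2, hsy2, Finset.sum_mul_sum]
    rw [map_sum]
    exact Finset.sum_congr rfl fun γ _ => map_sum _ _ _
  rw [hexp]
  have hstep : ∀ γ ∈ sx, ∀ δ ∈ sy, (γ ≠ γx ∨ δ ≠ γy) →
      gproj 𝒜 h (γx + γy) (gproj 𝒜 h γ x * gproj 𝒜 h δ y) = 0 := by
    intro γ hγ δ hδ hne
    refine gproj_eq_zero 𝒜 h (hmul (gproj_mem 𝒜 h γ x) (gproj_mem 𝒜 h δ y)) (ne_of_gt ?_)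
    rcases hne with hne | hne
    · exact add_lt_add_of_lt_of_le (lt_of_le_of_ne (hxle γ hγ) (Ne.symm hne)) (hyle δ hδ)
    · exact add_lt_add_of_le_of_lt (hxle γ hγ) (lt_of_le_of_ne (hyle δ hδ) (Ne.symm hne))
  have hinner : ∑ δ ∈ sy, gproj 𝒜 h (γx + γy) (gproj 𝒜 h γx x * gproj 𝒜 h δ y)
      = gproj 𝒜 h γx x * gproj 𝒜 h γy y := by
    have h0 : ∀ δ ∈ sy, δ ≠ γy →
        gproj 𝒜 h (γx + γy) (gproj 𝒜 h γx x * gproj 𝒜 h δ y) = 0 := by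
      intro δ hδ hne
      by_cases hγx : γx ∈ sx
      · exact hstep γx hγx δ hδ (Or.inr hne)
      · rw [hsx0 γx hγx, zero_mul, map_zero]
    have h1 : γy ∉ sy → gproj 𝒜 h (γx + γy) (gproj 𝒜 h γx x * gproj 𝒜 h γy y) = 0 := by
      intro hγy
      rw [hsy0 γy hγy, mul_zero, map_zero]
    rw [Finset.sum_eq_single γy h0 h1]
    exact gproj_eq_self 𝒜 h (hmul (gproj_mem 𝒜 h γx x) (gproj_mem 𝒜 h γy y))
  have houter : ∀ γ ∈ sx, γ ≠ γx → ∑ δ ∈ sy,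
      gproj 𝒜 h (γx + γy) (gproj 𝒜 h γ x * gproj 𝒜 h δ y) = 0 :=
    fun γ hγ hne => Finset.sum_eq_zero fun δ hδ => hstep γ hγ δ hδ (Or.inl hne)
  have houter0 : γx ∉ sx → ∑ δ ∈ sy,
      gproj 𝒜 h (γx + γy) (gproj 𝒜 h γx x * gproj 𝒜 h δ y) = 0 :=
    fun hγx => Finset.sum_eq_zero fun δ _ => by rw [hsx0 γx hγx, zero_mul, map_zero]
  rw [Finset.sum_eq_single γx houter houter0]
  exact hinner

theorem unit_homogeneous [Nontrivial E] (h : DirectSum.IsInternal 𝒜)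
    (hone : (1 : E) ∈ 𝒜 0)
    (hmul : ∀ {γ δ : Γ} {x y : E}, x ∈ 𝒜 γ → y ∈ 𝒜 δ → x * y ∈ 𝒜 (γ + δ))
    (hdiv : ∀ (γ : Γ) (x : E), x ∈ 𝒜 γ → x ≠ 0 → IsUnit x)
    {a b : E} (hab : a * b = 1) : ∃ γ, a ∈ 𝒜 γ ∧ a ≠ 0 := by
  classical
  obtain ⟨sa, hsa0, hsa1, hsa2⟩ := gproj_support 𝒜 h a
  obtain ⟨sb, hsb0, hsb1, hsb2⟩ := gproj_support 𝒜 h b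
  have ha : a ≠ 0 := fun h0 => one_ne_zero (α := E) (by rw [← hab, h0, zero_mul])
  have hb : b ≠ 0 := fun h0 => one_ne_zero (α := E) (by rw [← hab, h0, mul_zero])
  have hsane : sa.Nonempty := by
    rcases Finset.eq_empty_or_nonempty sa with he | hne
    · exact absurd (by rw [hsa2, he, Finset.sum_empty]) ha
    · exact hne
  have hsbne : sb.Nonempty := by
    rcases Finset.eq_empty_or_nonempty sb with he | hne
    · exact absurd (by rw [hsb2, he, Finset.sum_empty]) hb
    · exact hne
  set ta := sa.max' hsane with hta
  set ma := sa.min' hsane with hma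
  set tb := sb.max' hsbne with htb
  set mb := sb.min' hsbne with hmb
  have hatop : ∀ γ, ta < γ → gproj 𝒜 h γ a = 0 := fun γ hγ =>
    hsa0 γ fun hmem => absurd (sa.le_max' γ hmem) (not_le.2 hγ)
  have hbtop : ∀ γ, tb < γ → gproj 𝒜 h γ b = 0 := fun γ hγ =>
    hsb0 γ fun hmem => absurd (sb.le_max' γ hmem) (not_le.2 hγ)
  have habot : ∀ γ, γ < ma → gproj 𝒜 h γ a = 0 := fun γ hγ =>
    hsa0 γ fun hmem => absurd (sa.min'_le γ hmem) (not_le.2 hγ)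
  have hbbot : ∀ γ, γ < mb → gproj 𝒜 h γ b = 0 := fun γ hγ =>
    hsb0 γ fun hmem => absurd (sb.min'_le γ hmem) (not_le.2 hγ)
  -- products of top (resp. bottom) components are nonzero
  have hprodne : ∀ (γ δ : Γ), gproj 𝒜 h γ a ≠ 0 → gproj 𝒜 h δ b ≠ 0 →
      gproj 𝒜 h γ a * gproj 𝒜 h δ b ≠ 0 := by
    intro γ δ h1 h2
    exact ((hdiv γ _ (gproj_mem 𝒜 h γ a) h1).mul (hdiv δ _ (gproj_mem 𝒜 h δ b) h2)).ne_zero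
  have h1proj : ∀ γ : Γ, γ ≠ 0 → gproj 𝒜 h γ (a * b) = 0 := by
    intro γ hγ
    rw [hab]
    exact gproj_eq_zero 𝒜 h hone (fun hh => hγ hh.symm)
  have htop : ta + tb = 0 := by
    by_contra hne
    have := (gproj_mul_top 𝒜 h hmul hatop hbtop).1
    rw [h1proj _ hne] at this
    exact hprodne ta tb (hsa1 _ (sa.max'_mem hsane)) (hsb1 _ (sb.max'_mem hsbne)) this.symm
  have hbot : ma + mb = 0 := by
    by_contra hne
    have := gproj_mul_bot 𝒜 h hmul habot hbbot
    rw [h1proj _ hne] at this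
    exact hprodne ma mb (hsa1 _ (sa.min'_mem hsane)) (hsb1 _ (sb.min'_mem hsbne)) this.symm
  have hmata : ma = ta := by
    have h1 : ma ≤ ta := sa.min'_le _ (sa.max'_mem hsane)
    have h2 : mb ≤ tb := sb.min'_le _ (sb.max'_mem hsbne)
    have : ta ≤ ma := by
      have : ta = -tb := eq_neg_of_add_eq_zero_left htop
      have h3 : ma = -mb := eq_neg_of_add_eq_zero_left hbot
      rw [this, h3]
      exact neg_le_neg h2
    exact le_antisymm h1 this
  have hsaeq : sa = {ma} := by
    refine Finset.eq_singleton_iff_nonempty_unique_mem.2 ⟨hsane, fun γ hγ => ?_⟩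
    exact le_antisymm (hmata ▸ sa.le_max' γ hγ) (sa.min'_le γ hγ)
  refine ⟨ma, ?_, ha⟩
  rw [hsa2, hsaeq, Finset.sum_singleton]
  exact gproj_mem 𝒜 h ma a

theorem lead_unique (h : DirectSum.IsInternal 𝒜) {b x y : E} {δ δ' : Γ}
    (hx : x ∈ 𝒜 δ) (hx0 : x ≠ 0) (hbx : b - x ∈ ⨆ γ ∈ Set.Ioi δ, 𝒜 γ)
    (hy : y ∈ 𝒜 δ') (hy0 : y ≠ 0) (hby : b - y ∈ ⨆ γ ∈ Set.Ioi δ', 𝒜 γ) : x = y := by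
  have hπx : gproj 𝒜 h δ b = x := by
    have h1 : gproj 𝒜 h δ (b - x) = 0 := gproj_sup 𝒜 h hbx (lt_irrefl δ)
    rw [map_sub, sub_eq_zero] at h1
    rw [h1, gproj_eq_self 𝒜 h hx]
  have hπy : gproj 𝒜 h δ' b = y := by
    have h1 : gproj 𝒜 h δ' (b - y) = 0 := gproj_sup 𝒜 h hby (lt_irrefl δ')
    rw [map_sub, sub_eq_zero] at h1
    rw [h1, gproj_eq_self 𝒜 h hy]
  rcases lt_trichotomy δ δ' with hlt | heq | hgt
  · exfalso
    have h1 : gproj 𝒜 h δ (b - y) = 0 := gproj_sup 𝒜 h hby (fun hh => absurd hh (not_lt.2 hlt.le))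
    rw [map_sub, sub_eq_zero, hπx, gproj_eq_zero 𝒜 h hy (ne_of_gt hlt)] at h1
    exact hx0 h1
  · rw [← hπx, heq, hπy]
  · exfalso
    have h1 : gproj 𝒜 h δ' (b - x) = 0 := gproj_sup 𝒜 h hbx (fun hh => absurd hh (not_lt.2 hgt.le))
    rw [map_sub, sub_eq_zero, hπy, gproj_eq_zero 𝒜 h hx (ne_of_gt hgt)] at h1
    exact hy0 h1

end Aux2



/-- Lemma 2.3(ii) of Hazrat–Wadsworth: let `E` be a graded division ring
(grade group totally ordered, torsion-free abelian), `Q = q(E)` its quotient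
division ring of central fractions via `f : E → Q`, and `L` the leading-term
map `λ` extended to `Q*` (characterized by picking the lowest-degree
homogeneous component on `E` and multiplicativity). If `τE` is a graded
involution of `E`, extended to an involution `τQ` of `Q`, then
`τ(λ(q)) = λ(τ(q))` for all `q ∈ Q*`; consequently `λ(Σ_τ(Q)) ⊆ Σ_τ(E)` and
`Σ_τ(Q) ∩ E* ⊆ Σ_τ(E)`. -/
theorem stmt14 {Γ E Q : Type*} [AddCommGroup Γ] [LinearOrder Γ] [IsOrderedAddMonoid Γ] [DecidableEq Γ]
    [Ring E] [Nontrivial E] [DivisionRing Q]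
    (𝒜 : Γ → AddSubgroup E)
    (hinternal : DirectSum.IsInternal 𝒜)
    (hone : (1 : E) ∈ 𝒜 0)
    (hmul : ∀ {γ δ : Γ} {x y : E}, x ∈ 𝒜 γ → y ∈ 𝒜 δ → x * y ∈ 𝒜 (γ + δ))
    (hdiv : ∀ (γ : Γ) (x : E), x ∈ 𝒜 γ → x ≠ 0 → IsUnit x)
    -- `Q` is the quotient division ring of `E` by central localization:
    (f : E →+* Q) (hfinj : Function.Injective f)
    (hloc : ∀ q : Q, q ≠ 0 → ∃ a c : E, a ≠ 0 ∧ c ≠ 0 ∧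
      c ∈ Subring.center E ∧ q = f a * (f c)⁻¹)
    -- `τE` is a graded involution of `E`:
    (τE : E → E)
    (hEadd : ∀ a b : E, τE (a + b) = τE a + τE b)
    (hEmul : ∀ a b : E, τE (a * b) = τE b * τE a)
    (hE2 : ∀ a : E, τE (τE a) = a)
    (hEgr : ∀ (γ : Γ) (x : E), x ∈ 𝒜 γ → τE x ∈ 𝒜 γ)
    -- `τQ` is the extension of `τE` to an involution of `Q`:
    (τQ : Q → Q)
    (hQadd : ∀ p q : Q, τQ (p + q) = τQ p + τQ q)
    (hQmul : ∀ p q : Q, τQ (p * q) = τQ q * τQ p)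
    (hQ2 : ∀ q : Q, τQ (τQ q) = q)
    (hcompat : ∀ a : E, τQ (f a) = f (τE a))
    -- `L` is the leading-term map `λ : Q* → E*`:
    (L : Q → E)
    (hlead : ∀ a : E, a ≠ 0 → ∃ δ : Γ,
      L (f a) ∈ 𝒜 δ ∧ L (f a) ≠ 0 ∧ a - L (f a) ∈ ⨆ γ ∈ Set.Ioi δ, 𝒜 γ)
    (hLmul : ∀ p q : Q, p ≠ 0 → q ≠ 0 → L (p * q) = L p * L q)
    (hLid : ∀ (γ : Γ) (x : E), x ∈ 𝒜 γ → x ≠ 0 → L (f x) = x) :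
    (∀ q : Q, q ≠ 0 → τE (L q) = L (τQ q)) ∧
    (∀ q : Qˣ, q ∈ Subgroup.closure {u : Qˣ | τQ (u : Q) = (u : Q)} →
      ∃ v : Eˣ, (v : E) = L (q : Q) ∧
        v ∈ Subgroup.closure {w : Eˣ | τE (w : E) = (w : E)}) ∧
    (∀ (a : Eˣ) (q : Qˣ), (q : Q) = f (a : E) →
      q ∈ Subgroup.closure {u : Qˣ | τQ (u : Q) = (u : Q)} →
      a ∈ Subgroup.closure {w : Eˣ | τE (w : E) = (w : E)}) := by
  classical
  -- basic facts about τE, τQ, f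
  have hτE0 : τE 0 = 0 := by
    have := hEadd 0 0
    rw [add_zero] at this
    exact add_eq_left.1 this.symm
  have hτEsub : ∀ a b : E, τE (a - b) = τE a - τE b := by
    intro a b
    have := hEadd (a - b) b
    rw [sub_add_cancel] at this
    exact eq_sub_of_add_eq (by rw [← this])
  have hτEinj : ∀ a : E, a ≠ 0 → τE a ≠ 0 := by
    intro a ha h0
    exact ha (by rw [← hE2 a, h0, hτE0])
  have hτQ0 : τQ 0 = 0 := by
    have := hQadd 0 0
    rw [add_zero] at this
    exact add_eq_left.1 this.symm
  have hτQinj : ∀ q : Q, q ≠ 0 → τQ q ≠ 0 := by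
    intro q hq h0
    exact hq (by rw [← hQ2 q, h0, hτQ0])
  have hf0 : ∀ a : E, a ≠ 0 → f a ≠ 0 := by
    intro a ha h0
    exact ha (hfinj (by rw [h0, map_zero]))
  -- L (f a) is a unit for a ≠ 0
  have hLfu : ∀ a : E, a ≠ 0 → IsUnit (L (f a)) := by
    intro a ha
    obtain ⟨δ, h1, h2, _⟩ := hlead a ha
    exact hdiv δ _ h1 h2
  -- key lemma on E : τE commutes with taking the leading term
  have keyE : ∀ a : E, a ≠ 0 → τE (L (f a)) = L (f (τE a)) := by
    intro a ha
    obtain ⟨δ, h1, h2, h3⟩ := hlead a ha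
    obtain ⟨δ', k1, k2, k3⟩ := hlead (τE a) (hτEinj a ha)
    have hτsup : τE a - τE (L (f a)) ∈ ⨆ γ ∈ Set.Ioi δ, 𝒜 γ := by
      rw [← hτEsub]
      set φ : E →+ E := AddMonoidHom.mk' τE hEadd with hφ
      have hle : (⨆ γ ∈ Set.Ioi δ, 𝒜 γ) ≤ AddSubgroup.comap φ (⨆ γ ∈ Set.Ioi δ, 𝒜 γ) := by
        refine iSup₂_le fun γ hγ x hx => ?_
        have : τE x ∈ 𝒜 γ := hEgr γ x hx
        exact AddSubgroup.mem_comap.2 (le_iSup₂ (f := fun γ _ => 𝒜 γ) γ hγ this)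
      exact AddSubgroup.mem_comap.1 (hle h3)
    exact lead_unique 𝒜 hinternal (hEgr δ _ h1) (hτEinj _ h2) hτsup k1 k2 k3
  -- Part 1
  have part1 : ∀ q : Q, q ≠ 0 → τE (L q) = L (τQ q) := by
    intro q hq0
    obtain ⟨a, c, ha, hc, hcz, hq⟩ := hloc q hq0
    have hfc : f c ≠ 0 := hf0 c hc
    have hqc : q * f c = f a := by
      rw [hq, mul_assoc, inv_mul_cancel₀ hfc, mul_one]
    have h1 : L q * L (f c) = L (f a) := by
      rw [← hqc, hLmul q (f c) hq0 hfc]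
    have hτq0 : τQ q ≠ 0 := hτQinj q hq0
    have h2 : f (τE c) * τQ q = f (τE a) := by
      have := congrArg τQ hqc
      rw [hQmul, hcompat, hcompat] at this
      exact this
    have h3 : L (f (τE c)) * L (τQ q) = L (f (τE a)) := by
      rw [← h2, hLmul _ _ (hf0 _ (hτEinj c hc)) hτq0]
    have h4 : L (f (τE c)) * τE (L q) = L (f (τE a)) := by
      rw [← keyE a ha, ← h1, hEmul, keyE c hc]
    have hu : IsUnit (L (f (τE c))) := hLfu _ (hτEinj c hc)
    obtain ⟨u, hu⟩ := hu
    have := h3.trans h4.symm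
    rw [← hu] at this
    exact (Units.mul_right_inj u).1 this.symm
  -- L is unit-valued on nonzero elements of Q
  have hL1 : L (1 : Q) = 1 := by
    have h1 : (1 : Q) = f 1 := (map_one f).symm
    rw [h1]
    exact hLid 0 1 hone one_ne_zero
  have hLu : ∀ q : Q, q ≠ 0 → IsUnit (L q) := by
    intro q hq0
    obtain ⟨a, c, ha, hc, hcz, hq⟩ := hloc q hq0
    have hfc : f c ≠ 0 := hf0 c hc
    have hqc : q * f c = f a := by
      rw [hq, mul_assoc, inv_mul_cancel₀ hfc, mul_one]
    have h1 : L q * L (f c) = L (f a) := by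
      rw [← hqc, hLmul q (f c) hq0 hfc]
    obtain ⟨uc, huc⟩ := hLfu c hc
    have h2 : L q = L (f a) * ↑uc⁻¹ := by
      rw [← h1, ← huc, Units.mul_inv_cancel_right]
    rw [h2]
    exact (hLfu a ha).mul uc⁻¹.isUnit
  have part2 : ∀ q : Qˣ, q ∈ Subgroup.closure {u : Qˣ | τQ (u : Q) = (u : Q)} →
      ∃ v : Eˣ, (v : E) = L (q : Q) ∧
        v ∈ Subgroup.closure {w : Eˣ | τE (w : E) = (w : E)} := by
    intro q hq
    refine Subgroup.closure_induction ?_ ?_ ?_ ?_ hq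
    · intro u hu
      obtain ⟨v, hv⟩ := hLu (u : Q) u.ne_zero
      refine ⟨v, hv, Subgroup.subset_closure ?_⟩
      show τE (v : E) = (v : E)
      rw [hv, part1 _ u.ne_zero, hu]
    · exact ⟨1, by rw [Units.val_one, Units.val_one, hL1], one_mem _⟩
    · intro x y hx hy ⟨vx, hvx, hcx⟩ ⟨vy, hvy, hcy⟩
      refine ⟨vx * vy, ?_, mul_mem hcx hcy⟩
      rw [Units.val_mul, Units.val_mul, hvx, hvy,
        ← hLmul (x : Q) (y : Q) x.ne_zero y.ne_zero]
    · intro x hx ⟨v, hv, hc⟩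
      refine ⟨v⁻¹, ?_, inv_mem hc⟩
      have hxx : L (x : Q) * L ((x⁻¹ : Qˣ) : Q) = 1 := by
        rw [← hLmul _ _ x.ne_zero (x⁻¹ : Qˣ).ne_zero, Units.mul_inv, hL1]
      calc ((v⁻¹ : Eˣ) : E) = ↑v⁻¹ * (L (x : Q) * L ((x⁻¹ : Qˣ) : Q)) := by
            rw [hxx, mul_one]
        _ = (↑v⁻¹ * ↑v) * L ((x⁻¹ : Qˣ) : Q) := by rw [hv, mul_assoc]
        _ = L ((x⁻¹ : Qˣ) : Q) := by rw [Units.inv_mul, one_mul]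
  refine ⟨part1, part2, ?_⟩
  intro a q hqa hq
  obtain ⟨v, hv, hc⟩ := part2 q hq
  obtain ⟨γ, hγ, hane⟩ :=
    unit_homogeneous 𝒜 hinternal hone hmul hdiv (Units.mul_inv a)
  have hLa : L (f (a : E)) = (a : E) := hLid γ _ hγ hane
  have hva : (v : E) = (a : E) := by rw [hv, hqa, hLa]
  have hveq : v = a := Units.ext hva
  rwa [← hveq]
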